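/- Let M be a metrizable topological space, let N ⊆ M be any subset, and let U be an open subset of M with N ⊆ U. Then there exists an open set V ⊆ M with N ⊆ V and closure(V) ⊆ U ∪ closure(N). -/
import Mathlib


/-- good shrinking. Let `M` be a metrizable topological space, `N ⊆ M` any
subset and `U ⊆ M` open with `N ⊆ U`. Then there is an open `V` with `N ⊆ V` and
`closure V ⊆ U ∪ closure N`. -/
theorem stmt12 {M : Type*} [TopologicalSpace M] [TopologicalSpace.MetrizableSpace M]
    (N U : Set M) (hU : IsOpen U) (hNU : N ⊆ U) :
    ∃ V : Set M, IsOpen V ∧ N ⊆ V ∧ closure V ⊆ U ∪ closure N := by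
  letI : MetricSpace M := TopologicalSpace.metrizableSpaceMetric M
  rcases N.eq_empty_or_nonempty with hN | hN
  · exact ⟨∅, isOpen_empty, by simp [hN], by simp⟩
  rcases Uᶜ.eq_empty_or_nonempty with hUc | hUc
  · refine ⟨Set.univ, isOpen_univ, Set.subset_univ _, ?_⟩
    have : U = Set.univ := by simpa [Set.compl_empty_iff] using hUc
    simp [this]
  refine ⟨{x | Metric.infDist x N < Metric.infDist x Uᶜ}, ?_, ?_, ?_⟩
  · exact isOpen_lt (Metric.continuous_infDist_pt N) (Metric.continuous_infDist_pt Uᶜ)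
  · intro x hx
    have h1 : Metric.infDist x N = 0 := Metric.infDist_zero_of_mem hx
    have h2 : 0 < Metric.infDist x Uᶜ :=
      (hU.isClosed_compl.notMem_iff_infDist_pos hUc).1 (by simpa using hNU hx)
    simpa [h1] using h2
  · intro x hx
    have hle : Metric.infDist x N ≤ Metric.infDist x Uᶜ :=
      closure_lt_subset_le (Metric.continuous_infDist_pt N)
        (Metric.continuous_infDist_pt Uᶜ) hx
    by_cases hxU : x ∈ U
    · exact Or.inl hxU
    · right
      have h0 : Metric.infDist x Uᶜ = 0 := Metric.infDist_zero_of_mem hxU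
      have : Metric.infDist x N = 0 :=
        le_antisymm (h0 ▸ hle) (Metric.infDist_nonneg)
      exact (Metric.mem_closure_iff_infDist_zero hN).2 this
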